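/- Let R_T ∈ ℂ^{N_T×N_T} be Hermitian positive semidefinite with positive semidefinite square root R_T^{1/2}, let F ∈ ℂ^{N_T×K}, set T = R_T^{1/2} F F^H R_T^{1/2}, let λ_1,…,λ_{N_R} ≥ 0, and let N_S be a positive integer with N_S ≥ K. For each j with λ_j > 0 let δ_j be the unique nonnegative solution of the fixed-point equation δ_j = (1/N_S)·tr(T·(I_{N_T} + (λ_j/(1+λ_j δ_j))·T)^{-1}) (terms with λ_j = 0 vanish). Then, writing Ĩ = Σ_{j=1}^{N_R} log det(I_{N_T} + λ_j·T), one has ((N_S − min{K, rank(F F^H)})/N_S)·Ĩ ≤ Σ_{j=1}^{N_R} ρ̄(λ_j, T, N_S, δ_j) ≤ Ĩ, where ρ̄(λ,T,N_S,δ) = log det(I_{N_T} + (λ/(1+λδ))T) + N_S·log(1+λδ) − N_S·λδ/(1+λδ). -/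

import Mathlib

open Matrix
open scoped ComplexOrder

section ScalarAux

open Finset

lemma log_ge_sub_one_div (c : ℝ) (hc : 1 ≤ c) : (c - 1) / c ≤ Real.log c := by
  have hc0 : 0 < c := lt_of_lt_of_le one_pos hc
  have h := Real.log_le_sub_one_of_pos (x := c⁻¹) (by positivity)
  rw [Real.log_inv] at h
  have : c⁻¹ - 1 ≤ -((c-1)/c) := by field_simp; linarith
  nlinarith [h, this]

lemma self_div_add_le_log (x : ℝ) (hx : 0 ≤ x) : x / (1 + x) ≤ Real.log (1 + x) := by
  have h1 : (0:ℝ) < 1 + x := by linarith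
  have h := Real.log_le_sub_one_of_pos (x := (1+x)⁻¹) (by positivity)
  rw [Real.log_inv] at h
  have h2 : (1+x)⁻¹ - 1 = -(x/(1+x)) := by field_simp; ring
  linarith [h, h2.le]

noncomputable def fF {n : ℕ} (a : Fin n → ℝ) (NS : ℕ) (x : ℝ) : ℝ :=
  (∑ i, Real.log (1 + a i / x)) + (NS:ℝ) * Real.log x - (NS:ℝ) * ((x - 1) / x)

lemma fF_hasDerivAt {n : ℕ} (a : Fin n → ℝ) (ha : ∀ i, 0 ≤ a i) (NS : ℕ)
    (x : ℝ) (hx : 0 < x) :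
    HasDerivAt (fF a NS)
      ((∑ i, -(a i) / (x * (x + a i))) + (NS:ℝ) / x - (NS:ℝ) / x ^ 2) x := by
  have hx0 : x ≠ 0 := ne_of_gt hx
  have h1 : HasDerivAt (fun y : ℝ => ∑ i, Real.log (1 + a i / y))
      (∑ i, -(a i) / (x * (x + a i))) x := by
    apply HasDerivAt.fun_sum
    intro i _
    have hxa : 0 < x + a i := by linarith [ha i]
    have hinner : HasDerivAt (fun y : ℝ => 1 + a i / y) (a i * -(x^2)⁻¹) x := by
      simpa [div_eq_mul_inv] using ((hasDerivAt_inv hx0).const_mul (a i)).const_add 1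
    have hne : 1 + a i / x ≠ 0 := by
      have : 0 < 1 + a i / x := by have := div_nonneg (ha i) hx.le; linarith
      exact ne_of_gt this
    have := hinner.log hne
    refine this.congr_deriv ?_
    symm
    field_simp
  have h2 : HasDerivAt (fun y : ℝ => (NS:ℝ) * Real.log y) ((NS:ℝ) / x) x := by
    simpa [div_eq_mul_inv, mul_comm] using (Real.hasDerivAt_log hx0).const_mul (NS:ℝ)
  have h3 : HasDerivAt (fun y : ℝ => (NS:ℝ) * ((y - 1) / y)) ((NS:ℝ) / x ^ 2) x := by
    have hd : HasDerivAt (fun y : ℝ => (y - 1) / y) ((1 * x - (x - 1) * 1) / x ^ 2) x :=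
      ((hasDerivAt_id x).sub_const 1).div (hasDerivAt_id x) hx0
    have := hd.const_mul (NS:ℝ)
    refine this.congr_deriv ?_
    ring
  exact (h1.add h2).sub h3

lemma g_le {n : ℕ} (a : Fin n → ℝ) (ha : ∀ i, 0 ≤ a i) (NS r : ℕ) (hr : r ≤ NS)
    (hcard : (univ.filter fun i => a i ≠ 0).card ≤ r)
    (c : ℝ) (hc : 1 ≤ c)
    (hfix : (NS:ℝ) * (c - 1) = ∑ i, c * a i / (c + a i))
    (x : ℝ) (hx1 : 1 ≤ x) (hxc : x ≤ c) :
    (NS:ℝ) * (x - 1) ≤ ∑ i, x * a i / (x + a i) := by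
  have key : ∑ i, (c * a i / (c + a i) - x * a i / (x + a i)) ≤ (NS:ℝ) * (c - x) := by
    have hterm : ∀ i : Fin n,
        c * a i / (c + a i) - x * a i / (x + a i)
          ≤ if a i ≠ 0 then (c - x) else 0 := by
      intro i
      by_cases h : a i = 0
      · simp [h]
      · simp only [h, ne_eq, not_false_eq_true, if_true]
        have hai : 0 < a i := lt_of_le_of_ne (ha i) (Ne.symm h)
        have hcx : 0 < c + a i := by linarith
        have hxx : 0 < x + a i := by linarith
        rw [div_sub_div _ _ (ne_of_gt hcx) (ne_of_gt hxx), div_le_iff₀ (by positivity)]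
        have hpos : 0 ≤ (c - x) * (c*x + c*(a i) + x*(a i)) :=
          mul_nonneg (by linarith) (by nlinarith)
        nlinarith [hpos]
    calc ∑ i, (c * a i / (c + a i) - x * a i / (x + a i))
        ≤ ∑ i, if a i ≠ 0 then (c - x) else 0 := Finset.sum_le_sum (fun i _ => hterm i)
      _ = (univ.filter fun i => a i ≠ 0).card * (c - x) := by
          rw [Finset.sum_ite, Finset.sum_const, Finset.sum_const]; simp
      _ ≤ (NS:ℝ) * (c - x) := by
          have : ((univ.filter fun i => a i ≠ 0).card : ℝ) ≤ (NS:ℝ) := by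
            exact_mod_cast le_trans hcard hr
          nlinarith [this, sub_nonneg.mpr hxc]
  have hsplit := Finset.sum_sub_distrib (s := univ)
    (f := fun i => c * a i / (c + a i)) (g := fun i => x * a i / (x + a i))
  rw [hsplit] at key
  linarith [key, hfix.le, hfix.ge]

lemma fF_antitone_step {n : ℕ} (a : Fin n → ℝ) (ha : ∀ i, 0 ≤ a i) (NS r : ℕ)
    (hr : r ≤ NS) (hcard : (univ.filter fun i => a i ≠ 0).card ≤ r)
    (c : ℝ) (hc : 1 ≤ c)
    (hfix : (NS:ℝ) * (c - 1) = ∑ i, c * a i / (c + a i)) :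
    fF a NS c ≤ fF a NS 1 := by
  have hanti : AntitoneOn (fF a NS) (Set.Icc 1 c) := by
    apply antitoneOn_of_deriv_nonpos (convex_Icc 1 c)
    · intro x hx
      have hx0 : 0 < x := lt_of_lt_of_le one_pos hx.1
      exact (fF_hasDerivAt a ha NS x hx0).continuousAt.continuousWithinAt
    · intro x hx
      rw [interior_Icc] at hx
      have hx0 : 0 < x := lt_of_lt_of_le one_pos hx.1.le
      exact (fF_hasDerivAt a ha NS x hx0).differentiableAt.differentiableWithinAt
    · intro x hx
      rw [interior_Icc] at hx
      have hx0 : 0 < x := lt_of_lt_of_le one_pos hx.1.le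
      rw [(fF_hasDerivAt a ha NS x hx0).deriv]
      have hg := g_le a ha NS r hr hcard c hc hfix x hx.1.le hx.2.le
      have hx2 : (0:ℝ) < x ^ 2 := by positivity
      have hsum : ∑ i, -(a i) / (x * (x + a i))
          = -((∑ i, x * a i / (x + a i)) / x ^ 2) := by
        have hterm : ∀ i ∈ univ, -(a i) / (x * (x + a i))
            = -(x * a i / (x + a i) / x ^ 2) := by
          intro i _
          have hxa : 0 < x + a i := by linarith [ha i]
          field_simp
        rw [Finset.sum_congr rfl hterm, Finset.sum_neg_distrib, Finset.sum_div]
      rw [hsum]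
      have hdiv : (NS:ℝ) * (x - 1) / x ^ 2 ≤ (∑ i, x * a i / (x + a i)) / x ^ 2 := by
        gcongr
      have heq : (NS:ℝ) / x - (NS:ℝ) / x ^ 2 = (NS:ℝ) * (x - 1) / x ^ 2 := by
        field_simp
      linarith [hdiv, heq.le, heq.ge]
  have := hanti (Set.left_mem_Icc.mpr hc) (Set.right_mem_Icc.mpr hc) hc
  exact this

lemma core_bounds {n : ℕ} (a : Fin n → ℝ) (ha : ∀ i, 0 ≤ a i) (NS r : ℕ)
    (hNS : 1 ≤ NS) (hr : r ≤ NS)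
    (hcard : (univ.filter fun i => a i ≠ 0).card ≤ r)
    (c : ℝ) (hc : 1 ≤ c)
    (hfix : (NS:ℝ) * (c - 1) = ∑ i, c * a i / (c + a i)) :
    ((NS:ℝ) - r) / NS * (∑ i, Real.log (1 + a i)) ≤ fF a NS c ∧
      fF a NS c ≤ ∑ i, Real.log (1 + a i) := by
  have hc0 : (0:ℝ) < c := lt_of_lt_of_le one_pos hc
  have hf1 : fF a NS 1 = ∑ i, Real.log (1 + a i) := by
    unfold fF; simp
  have hupper : fF a NS c ≤ ∑ i, Real.log (1 + a i) := by
    rw [← hf1]; exact fF_antitone_step a ha NS r hr hcard c hc hfix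
  refine ⟨?_, hupper⟩
  set I := ∑ i, Real.log (1 + a i) with hI
  set L := ∑ i, Real.log (1 + a i / c) with hL
  have hNSpos : (0:ℝ) < NS := by exact_mod_cast hNS
  have hlogc : 0 ≤ Real.log c := Real.log_nonneg hc
  have h3 : (c - 1) / c ≤ Real.log c := log_ge_sub_one_div c hc
  have hrNS : (r:ℝ) ≤ (NS:ℝ) := by exact_mod_cast hr
  have hr0 : (0:ℝ) ≤ (r:ℝ) := Nat.cast_nonneg r
  -- h1 : I - L ≤ r * log c
  have h1 : I - L ≤ (r:ℝ) * Real.log c := by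
    have hterm : ∀ i : Fin n, Real.log (1 + a i) - Real.log (1 + a i / c)
        ≤ if a i ≠ 0 then Real.log c else 0 := by
      intro i
      by_cases h : a i = 0
      · simp [h]
      · simp only [h, ne_eq, not_false_eq_true, if_true]
        have hai : 0 ≤ a i := ha i
        have hpos : (0:ℝ) < 1 + a i := by linarith
        have hpos2 : (0:ℝ) < 1 + a i / c := by
          have := div_nonneg hai hc0.le; linarith
        have hle : Real.log (1 + a i) ≤ Real.log (c * (1 + a i / c)) := by
          apply Real.log_le_log hpos
          have : c * (1 + a i / c) = c + a i := by field_simp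
          rw [this]; linarith
        rw [Real.log_mul (ne_of_gt hc0) (ne_of_gt hpos2)] at hle
        linarith
    have := Finset.sum_le_sum (s := univ) (fun i _ => hterm i)
    rw [Finset.sum_sub_distrib] at this
    calc I - L ≤ ∑ i, if a i ≠ 0 then Real.log c else 0 := this
      _ = ((univ.filter fun i => a i ≠ 0).card : ℝ) * Real.log c := by
          rw [Finset.sum_ite, Finset.sum_const, Finset.sum_const]; simp
      _ ≤ (r:ℝ) * Real.log c := by
          have : ((univ.filter fun i => a i ≠ 0).card : ℝ) ≤ (r:ℝ) := by
            exact_mod_cast hcard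
          nlinarith
  -- h2 : NS * ((c-1)/c) ≤ I
  have h2 : (NS:ℝ) * ((c - 1) / c) ≤ I := by
    have heq : (NS:ℝ) * ((c - 1) / c) = ∑ i, a i / (c + a i) := by
      rw [mul_div_assoc'] at *
      rw [hfix, Finset.sum_div]
      apply Finset.sum_congr rfl
      intro i _
      have hca : (0:ℝ) < c + a i := by linarith [ha i]
      field_simp
    rw [heq]
    apply Finset.sum_le_sum
    intro i _
    have hai := ha i
    have hca : (0:ℝ) < c + a i := by linarith
    have step1 : a i / (c + a i) = (a i / c) / (1 + a i / c) := by
      field_simp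
    have step2 := self_div_add_le_log (a i / c) (div_nonneg hai hc0.le)
    have step3 : Real.log (1 + a i / c) ≤ Real.log (1 + a i) := by
      apply Real.log_le_log
      · have := div_nonneg hai hc0.le; linarith
      · have : a i / c ≤ a i := div_le_self hai hc
        linarith
    rw [step1]
    linarith
  -- conclude
  have hfFval : fF a NS c = L + (NS:ℝ) * Real.log c - (NS:ℝ) * ((c - 1) / c) := rfl
  rw [hfFval, div_mul_eq_mul_div, div_le_iff₀ hNSpos]
  nlinarith [mul_le_mul_of_nonneg_left h2 hr0,
    mul_le_mul_of_nonneg_left h3 (mul_nonneg hNSpos.le (by linarith : (0:ℝ) ≤ (NS:ℝ) - r)),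
    mul_le_mul_of_nonneg_left h1 hNSpos.le]
end ScalarAux

section MatrixAux

variable {NT : ℕ}

lemma conj_sandwich_mul (U A B : Matrix (Fin NT) (Fin NT) ℂ)
    (h : star U * U = 1) :
    (U * A * star U) * (U * B * star U) = U * (A * B) * star U := by
  simp only [mul_assoc]
  rw [show star U * (U * (B * star U)) = B * star U from by rw [← mul_assoc, h, one_mul]]

section
variable (T : Matrix (Fin NT) (Fin NT) ℂ) (hT : T.IsHermitian)

lemma one_add_smul_spec (a : ℝ) :
    1 + (a:ℂ) • T =
      (hT.eigenvectorUnitary : Matrix (Fin NT) (Fin NT) ℂ) *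
        diagonal (fun i => ((1 + a * hT.eigenvalues i : ℝ) : ℂ)) *
        star (hT.eigenvectorUnitary : Matrix (Fin NT) (Fin NT) ℂ) := by
  set V := (hT.eigenvectorUnitary : Matrix (Fin NT) (Fin NT) ℂ)
  have hUU : V * star V = 1 := mem_unitaryGroup_iff.mp hT.eigenvectorUnitary.2
  have hdiag : diagonal (fun i => ((1 + a * hT.eigenvalues i : ℝ) : ℂ))
      = 1 + (a:ℂ) • diagonal (RCLike.ofReal ∘ hT.eigenvalues) := by
    rw [← diagonal_one, ← diagonal_smul, diagonal_add]
    congr 1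
    funext i
    simp only [Pi.add_apply, Pi.smul_apply, Function.comp_apply, Pi.one_apply]
    push_cast
    simp [smul_eq_mul]
  rw [hdiag, mul_add, add_mul, mul_one, hUU, Matrix.mul_smul, Matrix.smul_mul]
  congr 1
  exact congrArg (fun M => (a:ℂ) • M) hT.spectral_theorem

lemma det_one_add_smul (a : ℝ) :
    (1 + (a:ℂ) • T).det = ((∏ i, (1 + a * hT.eigenvalues i) : ℝ) : ℂ) := by
  rw [one_add_smul_spec T hT a, det_mul_right_comm,
    mem_unitaryGroup_iff.mp hT.eigenvectorUnitary.2, one_mul, det_diagonal]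
  push_cast
  rfl

lemma det_one_add_smul_re (a : ℝ) :
    (1 + (a:ℂ) • T).det.re = ∏ i, (1 + a * hT.eigenvalues i) := by
  rw [det_one_add_smul T hT a, Complex.ofReal_re]

lemma trace_mul_inv_spec (a : ℝ) (h : ∀ i, 1 + a * hT.eigenvalues i ≠ 0) :
    (T * (1 + (a:ℂ) • T)⁻¹).trace
      = ((∑ i, hT.eigenvalues i / (1 + a * hT.eigenvalues i) : ℝ) : ℂ) := by
  have hUU : (hT.eigenvectorUnitary : Matrix (Fin NT) (Fin NT) ℂ) *
      star (hT.eigenvectorUnitary : Matrix (Fin NT) (Fin NT) ℂ) = 1 :=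
    mem_unitaryGroup_iff.mp hT.eigenvectorUnitary.2
  have hsUU : star (hT.eigenvectorUnitary : Matrix (Fin NT) (Fin NT) ℂ) *
      (hT.eigenvectorUnitary : Matrix (Fin NT) (Fin NT) ℂ) = 1 :=
    mem_unitaryGroup_iff'.mp hT.eigenvectorUnitary.2
  have hinv : (1 + (a:ℂ) • T)⁻¹ =
      (hT.eigenvectorUnitary : Matrix (Fin NT) (Fin NT) ℂ) *
        diagonal (fun i => (((1 + a * hT.eigenvalues i : ℝ)⁻¹ : ℝ) : ℂ)) *
        star (hT.eigenvectorUnitary : Matrix (Fin NT) (Fin NT) ℂ) := by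
    apply inv_eq_right_inv
    rw [one_add_smul_spec T hT a, conj_sandwich_mul _ _ _ hsUU, diagonal_mul_diagonal]
    have hone : (fun i => ((1 + a * hT.eigenvalues i : ℝ) : ℂ) *
        (((1 + a * hT.eigenvalues i : ℝ)⁻¹ : ℝ) : ℂ)) = fun _ => (1:ℂ) := by
      funext i
      rw [← Complex.ofReal_mul, mul_inv_cancel₀ (h i), Complex.ofReal_one]
    rw [hone, diagonal_one, mul_one, hUU]
  rw [hinv]
  calc (T * ((hT.eigenvectorUnitary : Matrix (Fin NT) (Fin NT) ℂ) *
        diagonal (fun i => (((1 + a * hT.eigenvalues i : ℝ)⁻¹ : ℝ) : ℂ)) *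
        star (hT.eigenvectorUnitary : Matrix (Fin NT) (Fin NT) ℂ))).trace
      = (((hT.eigenvectorUnitary : Matrix (Fin NT) (Fin NT) ℂ) *
          diagonal (RCLike.ofReal ∘ hT.eigenvalues) *
          star (hT.eigenvectorUnitary : Matrix (Fin NT) (Fin NT) ℂ)) *
        ((hT.eigenvectorUnitary : Matrix (Fin NT) (Fin NT) ℂ) *
          diagonal (fun i => (((1 + a * hT.eigenvalues i : ℝ)⁻¹ : ℝ) : ℂ)) *
          star (hT.eigenvectorUnitary : Matrix (Fin NT) (Fin NT) ℂ))).trace := by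
        exact congrArg (fun M => (M * ((hT.eigenvectorUnitary : Matrix (Fin NT) (Fin NT) ℂ) *
          diagonal (fun i => (((1 + a * hT.eigenvalues i : ℝ)⁻¹ : ℝ) : ℂ)) *
          star (hT.eigenvectorUnitary : Matrix (Fin NT) (Fin NT) ℂ))).trace) hT.spectral_theorem
    _ = ((∑ i, hT.eigenvalues i / (1 + a * hT.eigenvalues i) : ℝ) : ℂ) := by
        rw [conj_sandwich_mul _ _ _ hsUU, trace_mul_cycle, ← mul_assoc, hsUU, one_mul,
          diagonal_mul_diagonal, trace_diagonal]
        push_cast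
        apply Finset.sum_congr rfl
        intro i _
        rw [div_eq_mul_inv]
        rfl
end
end MatrixAux


/-- The fixed-point equation `δ = (1/N_S)·tr(T·(I + (ρ/(1+ρδ))·T)⁻¹)`. -/
def FixedPointEq {n : ℕ} (T : Matrix (Fin n) (Fin n) ℂ) (ρ : ℝ) (NS : ℕ) (δ : ℝ) : Prop :=
  (δ : ℂ) = (NS : ℂ)⁻¹ * (T * (1 + ((ρ / (1 + ρ * δ) : ℝ) : ℂ) • T)⁻¹).trace

/-- `ρ̄(λ,T,N_S,δ)`, the closed-form per-eigenvalue sensing mutual information (eq. (7)). -/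
noncomputable def rhoBar {n : ℕ} (lam : ℝ) (T : Matrix (Fin n) (Fin n) ℂ)
    (NS : ℕ) (δ : ℝ) : ℝ :=
  Real.log ((1 + ((lam / (1 + lam * δ) : ℝ) : ℂ) • T).det.re)
    + (NS : ℝ) * Real.log (1 + lam * δ) - (NS : ℝ) * (lam * δ / (1 + lam * δ))

/-- **Two-sided bound on the closed-form sensing mutual information** (underlying eq. (13)
of the paper): `((N_S − min{K, rank(FFᴴ)})/N_S)·Ĩ ≤ Σ_j ρ̄(λ_j,T,N_S,δ_j) ≤ Ĩ`, where
`Ĩ = Σ_j log det(I + λ_j T)` and `T = R_T^{1/2} F Fᴴ R_T^{1/2}`. -/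
theorem smi_two_sided_bound {NT K NR NS : ℕ}
    (RT Rhalf : Matrix (Fin NT) (Fin NT) ℂ)
    (hRT : RT.PosSemidef) (hRhalf : Rhalf.PosSemidef) (hsq : Rhalf * Rhalf = RT)
    (F : Matrix (Fin NT) (Fin K) ℂ)
    (l : Fin NR → ℝ) (hl : ∀ j, 0 ≤ l j)
    (hNS1 : 1 ≤ NS) (hNSK : K ≤ NS)
    (δ : Fin NR → ℝ)
    (hδ : ∀ j, 0 < l j →
      0 ≤ δ j ∧ FixedPointEq (Rhalf * F * Fᴴ * Rhalf) (l j) NS (δ j)) :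
    (((NS : ℝ) - (min K (F * Fᴴ).rank : ℕ)) / (NS : ℝ)) *
        (∑ j : Fin NR,
          Real.log ((1 + ((l j : ℝ) : ℂ) • (Rhalf * F * Fᴴ * Rhalf)).det.re)) ≤
      ∑ j : Fin NR, rhoBar (l j) (Rhalf * F * Fᴴ * Rhalf) NS (δ j) ∧
    ∑ j : Fin NR, rhoBar (l j) (Rhalf * F * Fᴴ * Rhalf) NS (δ j) ≤
      ∑ j : Fin NR,
        Real.log ((1 + ((l j : ℝ) : ℂ) • (Rhalf * F * Fᴴ * Rhalf)).det.re) := by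
  have hT : (Rhalf * F * Fᴴ * Rhalf).PosSemidef := by
    have hEq : Rhalf * F * Fᴴ * Rhalf = (Rhalf * F) * (Rhalf * F)ᴴ := by
      rw [conjTranspose_mul, hRhalf.isHermitian.eq, Matrix.mul_assoc (Rhalf * F) Fᴴ Rhalf]
    rw [hEq]
    exact posSemidef_self_mul_conjTranspose _
  have hH : (Rhalf * F * Fᴴ * Rhalf).IsHermitian := hT.1
  set t : Fin NT → ℝ := hH.eigenvalues with ht_def
  have ht : ∀ i, 0 ≤ t i := fun i => hT.eigenvalues_nonneg i
  set r : ℕ := min K (F * Fᴴ).rank with hr_def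
  have hrNS : r ≤ NS := le_trans (min_le_left _ _) hNSK
  have hrankT : (Rhalf * F * Fᴴ * Rhalf).rank ≤ r := by
    apply le_min
    · calc (Rhalf * F * Fᴴ * Rhalf).rank ≤ (Rhalf * F * Fᴴ).rank :=
            rank_mul_le_left _ _
        _ ≤ (Rhalf * F).rank := rank_mul_le_left _ _
        _ ≤ K := (rank_le_card_width _).trans (Fintype.card_fin K).le
    · calc (Rhalf * F * Fᴴ * Rhalf).rank ≤ (Rhalf * F * Fᴴ).rank :=
            rank_mul_le_left _ _
        _ = (Rhalf * (F * Fᴴ)).rank := by rw [Matrix.mul_assoc Rhalf F Fᴴ]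
        _ ≤ (F * Fᴴ).rank := rank_mul_le_right _ _
  have hcardt : (Finset.univ.filter fun i => t i ≠ 0).card ≤ r := by
    have h1 : (Rhalf * F * Fᴴ * Rhalf).rank = Fintype.card {i // t i ≠ 0} :=
      hH.rank_eq_card_non_zero_eigs
    rw [Fintype.card_subtype] at h1
    omega
  -- per-j bounds
  have hj : ∀ j : Fin NR,
      (((NS : ℝ) - r) / NS) *
          Real.log ((1 + ((l j : ℝ) : ℂ) • (Rhalf * F * Fᴴ * Rhalf)).det.re) ≤
        rhoBar (l j) (Rhalf * F * Fᴴ * Rhalf) NS (δ j) ∧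
      rhoBar (l j) (Rhalf * F * Fᴴ * Rhalf) NS (δ j) ≤
        Real.log ((1 + ((l j : ℝ) : ℂ) • (Rhalf * F * Fᴴ * Rhalf)).det.re) := by
    intro j
    rcases eq_or_lt_of_le (hl j) with h0 | hpos
    · constructor <;> simp [rhoBar, ← h0]
    · obtain ⟨hd0, hfp⟩ := hδ j hpos
      set lam : ℝ := l j with hlam_def
      set d : ℝ := δ j with hd_def
      have hlam0 : lam ≠ 0 := ne_of_gt hpos
      have hld : 0 ≤ lam * d := mul_nonneg hpos.le hd0
      set c : ℝ := 1 + lam * d with hc_def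
      have hc : 1 ≤ c := by rw [hc_def]; linarith
      have hc0 : (0:ℝ) < c := lt_of_lt_of_le one_pos hc
      set μ : ℝ := lam / c with hμ_def
      have hμ0 : 0 ≤ μ := div_nonneg hpos.le hc0.le
      have hne : ∀ i, 1 + μ * t i ≠ 0 := by
        intro i
        have := mul_nonneg hμ0 (ht i)
        positivity
      have hlamne : ∀ i, (1:ℝ) + lam * t i ≠ 0 := by
        intro i
        have := mul_nonneg hpos.le (ht i)
        positivity
      -- turn the fixed point equation into a real sum identity
      have htr := trace_mul_inv_spec (Rhalf * F * Fᴴ * Rhalf) hH μ hne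
      have hfp' : (d : ℂ) = ((NS:ℝ)⁻¹ * ∑ i, t i / (1 + μ * t i) : ℝ) := by
        rw [FixedPointEq] at hfp
        rw [hfp]
        have hμeq : lam / (1 + lam * d) = μ := by rw [hμ_def, hc_def]
        rw [hμeq, htr]
        push_cast
        ring
      have hreal : d = (NS:ℝ)⁻¹ * ∑ i, t i / (1 + μ * t i) :=
        Complex.ofReal_injective hfp'
      set a : Fin NT → ℝ := fun i => lam * t i with ha_def
      have ha : ∀ i, 0 ≤ a i := fun i => mul_nonneg hpos.le (ht i)
      have hNSR : (0:ℝ) < (NS:ℝ) := by exact_mod_cast hNS1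
      have hfix : (NS:ℝ) * (c - 1) = ∑ i, c * a i / (c + a i) := by
        have hNSd : (NS:ℝ) * d = ∑ i, t i / (1 + μ * t i) := by
          rw [hreal, ← mul_assoc, mul_inv_cancel₀ (ne_of_gt hNSR), one_mul]
        have hc1 : c - 1 = lam * d := by rw [hc_def]; ring
        rw [hc1]
        calc (NS:ℝ) * (lam * d) = lam * ((NS:ℝ) * d) := by ring
          _ = lam * ∑ i, t i / (1 + μ * t i) := by rw [hNSd]
          _ = ∑ i, lam * (t i / (1 + μ * t i)) := by rw [Finset.mul_sum]
          _ = ∑ i, c * a i / (c + a i) := by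
              apply Finset.sum_congr rfl
              intro i _
              have h1 : (0:ℝ) < 1 + μ * t i := by
                have := mul_nonneg hμ0 (ht i); linarith
              have h2 : (0:ℝ) < c + a i := by
                have := ha i; linarith
              rw [hμ_def, ha_def]
              field_simp
      have hcarda : (Finset.univ.filter fun i => a i ≠ 0).card ≤ r := by
        have hset : (Finset.univ.filter fun i => a i ≠ 0) = (Finset.univ.filter fun i => t i ≠ 0) := by
          ext i
          simp [ha_def, mul_eq_zero, hlam0]
        rw [hset]; exact hcardt
      have hcore := core_bounds a ha NS r hNS1 hrNS hcarda c hc hfix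
      -- rewrite rhoBar as fF a NS c
      have hrho : rhoBar lam (Rhalf * F * Fᴴ * Rhalf) NS d = fF a NS c := by
        unfold rhoBar fF
        have hμeq : lam / (1 + lam * d) = μ := by rw [hμ_def, hc_def]
        have hdet := det_one_add_smul_re (Rhalf * F * Fᴴ * Rhalf) hH μ
        have hsum_eq : (∑ i, Real.log (1 + μ * t i)) = ∑ i, Real.log (1 + a i / c) := by
          apply Finset.sum_congr rfl
          intro i _
          congr 2
          rw [hμ_def, ha_def]
          ring
        have hc1 : lam * d = c - 1 := by rw [hc_def]; ring
        rw [hμeq, hdet, Real.log_prod (fun i _ => hne i), ← hc_def, hc1, hsum_eq]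
      -- rewrite the log det term as the sum
      have hlog : Real.log ((1 + ((lam : ℝ) : ℂ) • (Rhalf * F * Fᴴ * Rhalf)).det.re)
          = ∑ i, Real.log (1 + a i) := by
        rw [det_one_add_smul_re (Rhalf * F * Fᴴ * Rhalf) hH lam,
          Real.log_prod (fun i _ => hlamne i)]
      rw [hrho, hlog]
      exact hcore
  constructor
  · rw [Finset.mul_sum]
    exact Finset.sum_le_sum fun j _ => (hj j).1
  · exact Finset.sum_le_sum fun j _ => (hj j).2
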